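/- If H is a Hopf algebra with antipode S, then the coalgebra H together with the ternary operation [a,b,c] = aS(b)c is a Hopf heap, and its Grunspan map is S∘S. -/

import Mathlib

open Coalgebra TensorProduct

universe u v

/-- A Hopf heap: a coalgebra `C` together with a coalgebra map
`χ : C ⊗ C^co ⊗ C → C` (given here as a trilinear map) satisfying the heap axioms. -/
structure HopfHeap (F : Type u) (C : Type v) [Field F] [AddCommGroup C] [Module F C]
    [Coalgebra F C] where
  χ : C →ₗ[F] C →ₗ[F] C →ₗ[F] C
  counit_χ : ∀ a b c : C,
    counit (R := F) (χ a b c) = counit (R := F) a * counit (R := F) b * counit (R := F) c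
  comul_χ : ∀ (a b c : C) {ιa ιb ιc : Type v} (ra : Coalgebra.Repr.{u, v, v} F a ιa)
      (rb : Coalgebra.Repr.{u, v, v} F b ιb) (rc : Coalgebra.Repr.{u, v, v} F c ιc),
    comul (R := F) (χ a b c) =
      ∑ i ∈ ra.index, ∑ j ∈ rb.index, ∑ k ∈ rc.index,
        χ (ra.left i) (rb.right j) (rc.left k) ⊗ₜ[F] χ (ra.right i) (rb.left j) (rc.right k)
  assoc : ∀ a b c d e : C, χ (χ a b c) d e = χ a b (χ c d e)
  heap_left : ∀ (c a : C) {ι : Type v} (rc : Coalgebra.Repr.{u, v, v} F c ι),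
    ∑ i ∈ rc.index, χ (rc.left i) (rc.right i) a = counit (R := F) c • a
  heap_right : ∀ (c a : C) {ι : Type v} (rc : Coalgebra.Repr.{u, v, v} F c ι),
    ∑ i ∈ rc.index, χ a (rc.left i) (rc.right i) = counit (R := F) c • a

/-- `θ` is a Grunspan map for the Hopf heap `hh`: a coalgebra endomorphism satisfying
`[[a,b,θ c],d,e] = [a,[d,c,b],e]`. -/
def HopfHeap.IsGrunspan {F : Type u} {C : Type v} [Field F] [AddCommGroup C] [Module F C]
    [Coalgebra F C] (hh : HopfHeap F C) (θ : C →ₗ[F] C) : Prop :=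
  (∀ c : C, counit (R := F) (θ c) = counit (R := F) c) ∧
  (∀ (c : C) {ι : Type v} (rc : Coalgebra.Repr.{u, v, v} F c ι),
    comul (R := F) (θ c) = ∑ i ∈ rc.index, θ (rc.left i) ⊗ₜ[F] θ (rc.right i)) ∧
  (∀ a b c d e : C, hh.χ (hh.χ a b (θ c)) d e = hh.χ a (hh.χ d c b) e)

namespace HopfHeapAux

section Conv

variable {R : Type*} [CommSemiring R] {C : Type*} [AddCommMonoid C] [Module R C]
  [Coalgebra R C] {A : Type*} [Semiring A] [Algebra R A]

/-- Convolution product on linear maps from a coalgebra to an algebra. -/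
noncomputable def conv (f g : C →ₗ[R] A) : C →ₗ[R] A :=
  LinearMap.mul' R A ∘ₗ TensorProduct.map f g ∘ₗ Coalgebra.comul

/-- Convolution unit. -/
noncomputable def convOne : C →ₗ[R] A := Algebra.linearMap R A ∘ₗ Coalgebra.counit

lemma convOne_apply (x : C) : (convOne (R := R) (A := A)) x = algebraMap R A (counit x) := rfl

lemma conv_repr (f g : C →ₗ[R] A) {x : C} {ι : Type*} (r : Coalgebra.Repr R x ι) :
    conv f g x = ∑ i ∈ r.index, f (r.left i) * g (r.right i) := by
  simp only [conv, LinearMap.comp_apply, ← r.eq, map_sum, TensorProduct.map_tmul,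
    LinearMap.mul'_apply]

lemma sum_counit_smul {x : C} {ι : Type*} (r : Coalgebra.Repr R x ι) :
    ∑ i ∈ r.index, counit (R := R) (r.left i) • r.right i = x := by
  have h := congrArg (TensorProduct.lid R C) (Coalgebra.sum_counit_tmul_eq r)
  simp only [map_sum, TensorProduct.lid_tmul, one_smul] at h
  exact h

lemma sum_smul_counit {x : C} {ι : Type*} (r : Coalgebra.Repr R x ι) :
    ∑ i ∈ r.index, counit (R := R) (r.right i) • r.left i = x := by
  have h := congrArg (TensorProduct.rid R C) (Coalgebra.sum_tmul_counit_eq r)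
  simp only [map_sum, TensorProduct.rid_tmul, one_smul] at h
  exact h

lemma conv_one_right (f : C →ₗ[R] A) : conv f convOne = f := by
  ext x
  rw [conv_repr f convOne (ℛ R x)]
  have : ∀ i ∈ (ℛ R x).index, f ((ℛ R x).left i) * (convOne : C →ₗ[R] A) ((ℛ R x).right i)
      = f (counit (R := R) ((ℛ R x).right i) • (ℛ R x).left i) := by
    intro i _
    rw [convOne_apply, map_smul, Algebra.smul_def, Algebra.commutes]
  rw [Finset.sum_congr rfl this, ← map_sum, sum_smul_counit]

lemma conv_one_left (f : C →ₗ[R] A) : conv convOne f = f := by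
  ext x
  rw [conv_repr convOne f (ℛ R x)]
  have : ∀ i ∈ (ℛ R x).index, (convOne : C →ₗ[R] A) ((ℛ R x).left i) * f ((ℛ R x).right i)
      = f (counit (R := R) ((ℛ R x).left i) • (ℛ R x).right i) := by
    intro i _
    rw [convOne_apply, map_smul, Algebra.smul_def]
  rw [Finset.sum_congr rfl this, ← map_sum, sum_counit_smul]

lemma conv_assoc (f g h : C →ₗ[R] A) : conv (conv f g) h = conv f (conv g h) := by
  ext x
  set r : Coalgebra.Repr R x (C × C) := ℛ R x with hr
  set r₁ : ∀ i : C × C, Coalgebra.Repr R (r.left i) (C × C) := fun i => ℛ R (r.left i) with hr₁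
  set r₂ : ∀ i : C × C, Coalgebra.Repr R (r.right i) (C × C) := fun i => ℛ R (r.right i) with hr₂
  rw [conv_repr (conv f g) h r, conv_repr f (conv g h) r]
  have hL : ∀ i ∈ r.index, conv f g (r.left i) * h (r.right i) =
      ∑ j ∈ (r₁ i).index, f ((r₁ i).left j) * g ((r₁ i).right j) * h (r.right i) := by
    intro i _; rw [conv_repr f g (r₁ i), Finset.sum_mul]
  have hR : ∀ i ∈ r.index, f (r.left i) * conv g h (r.right i) =
      ∑ j ∈ (r₂ i).index, f (r.left i) * (g ((r₂ i).left j) * h ((r₂ i).right j)) := by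
    intro i _; rw [conv_repr g h (r₂ i), Finset.mul_sum]
  rw [Finset.sum_congr rfl hL, Finset.sum_congr rfl hR]
  have key := Coalgebra.sum_map_tmul_tmul_eq (R := R) f g h x (repr := r) (a₁ := r₁) (a₂ := r₂)
  have := congrArg (LinearMap.mul' R A ∘ₗ LinearMap.lTensor A (LinearMap.mul' R A)) key
  simpa [map_sum, mul_assoc] using this.symm

lemma conv_cancel {f m g : C →ₗ[R] A} (h1 : conv f m = convOne) (h2 : conv m g = convOne) :
    f = g := by
  calc f = conv f convOne := (conv_one_right f).symm
    _ = conv f (conv m g) := by rw [h2]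
    _ = conv (conv f m) g := (conv_assoc f m g).symm
    _ = conv convOne g := by rw [h1]
    _ = g := conv_one_left g

end Conv



section TensorCoalg

variable {R : Type*} [CommSemiring R] {A : Type*} {B : Type*}
  [AddCommMonoid A] [Module R A] [Coalgebra R A]
  [AddCommMonoid B] [Module R B] [Coalgebra R B]

lemma counit_tmul (x : A) (y : B) :
    counit (R := R) (x ⊗ₜ[R] y) = counit (R := R) x * counit (R := R) y := by
  rw [TensorProduct.counit_tmul, smul_eq_mul, mul_comm]

lemma comul_tmul_repr {x : A} {y : B} {ι κ : Type*} (rx : Coalgebra.Repr R x ι)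
    (ry : Coalgebra.Repr R y κ) :
    comul (R := R) (x ⊗ₜ[R] y) =
      ∑ i ∈ rx.index, ∑ j ∈ ry.index,
        (rx.left i ⊗ₜ[R] ry.left j) ⊗ₜ[R] (rx.right i ⊗ₜ[R] ry.right j) := by
  rw [TensorProduct.comul_tmul]
  rw [← rx.eq, ← ry.eq]
  rw [TensorProduct.sum_tmul]
  rw [map_sum]
  refine Finset.sum_congr rfl fun i _ => ?_
  rw [TensorProduct.tmul_sum, map_sum]
  refine Finset.sum_congr rfl fun j _ => ?_
  simp [TensorProduct.AlgebraTensorModule.tensorTensorTensorComm_tmul]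

/-- A representation of `comul (x ⊗ₜ y)` built from representations of `x` and `y`. -/
noncomputable def Repr.tmul {x : A} {y : B} {ι κ : Type*} (rx : Coalgebra.Repr R x ι)
    (ry : Coalgebra.Repr R y κ) :
    Coalgebra.Repr R (x ⊗ₜ[R] y) (ι × κ) where
  index := rx.index ×ˢ ry.index
  left p := rx.left p.1 ⊗ₜ[R] ry.left p.2
  right p := rx.right p.1 ⊗ₜ[R] ry.right p.2
  eq := by rw [comul_tmul_repr rx ry, Finset.sum_product]


lemma sum4_perm {M : Type*} [AddCommMonoid M] {ι₁ ι₂ ι₃ ι₄ : Type*}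
    (s₁ : Finset ι₁) (s₂ : Finset ι₂) (t : ι₁ → Finset ι₃) (u : ι₂ → Finset ι₄)
    (f : ι₁ → ι₂ → ι₃ → ι₄ → M) :
    ∑ i ∈ s₁, ∑ j ∈ s₂, ∑ k ∈ t i, ∑ l ∈ u j, f i j k l
      = ∑ j ∈ s₂, ∑ l ∈ u j, ∑ i ∈ s₁, ∑ k ∈ t i, f i j k l := by
  rw [Finset.sum_comm]
  refine Finset.sum_congr rfl fun j _ => ?_
  calc ∑ i ∈ s₁, ∑ k ∈ t i, ∑ l ∈ u j, f i j k l
      = ∑ i ∈ s₁, ∑ l ∈ u j, ∑ k ∈ t i, f i j k l :=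
        Finset.sum_congr rfl fun i _ => Finset.sum_comm
    _ = ∑ l ∈ u j, ∑ i ∈ s₁, ∑ k ∈ t i, f i j k l := Finset.sum_comm

/-- The tensor product of two coalgebras is a coalgebra (universe-polymorphic version,
not an instance to avoid clashing with mathlib's). -/
noncomputable def tensorCoalgebra : Coalgebra R (A ⊗[R] B) where
  toCoalgebraStruct := TensorProduct.instCoalgebraStruct
  coassoc := by
    apply TensorProduct.ext'
    intro x y
    set rx : Coalgebra.Repr R x (A × A) := ℛ R x
    set ry : Coalgebra.Repr R y (B × B) := ℛ R y
    set rx₁ : ∀ i : A × A, Coalgebra.Repr R (rx.left i) (A × A) := fun i => ℛ R (rx.left i)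
    set rx₂ : ∀ i : A × A, Coalgebra.Repr R (rx.right i) (A × A) := fun i => ℛ R (rx.right i)
    set ry₁ : ∀ j : B × B, Coalgebra.Repr R (ry.left j) (B × B) := fun j => ℛ R (ry.left j)
    set ry₂ : ∀ j : B × B, Coalgebra.Repr R (ry.right j) (B × B) := fun j => ℛ R (ry.right j)
    have hx := Coalgebra.sum_tmul_tmul_eq rx rx₁ rx₂
    have hy := Coalgebra.sum_tmul_tmul_eq ry ry₁ ry₂
    set Φ : (A ⊗[R] (A ⊗[R] A)) ⊗[R] (B ⊗[R] (B ⊗[R] B)) →ₗ[R]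
        (A ⊗[R] B) ⊗[R] ((A ⊗[R] B) ⊗[R] (A ⊗[R] B)) :=
      (LinearMap.lTensor (A ⊗[R] B)
        (TensorProduct.tensorTensorTensorComm R A A B B).toLinearMap) ∘ₗ
      (TensorProduct.tensorTensorTensorComm R A (A ⊗[R] A) B (B ⊗[R] B)).toLinearMap with hΦ
    have Φpure : ∀ (a b c : A) (d e f : B),
        Φ ((a ⊗ₜ[R] (b ⊗ₜ[R] c)) ⊗ₜ[R] (d ⊗ₜ[R] (e ⊗ₜ[R] f))) =
          (a ⊗ₜ[R] d) ⊗ₜ[R] ((b ⊗ₜ[R] e) ⊗ₜ[R] (c ⊗ₜ[R] f)) := by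
      intro a b c d e f
      simp [hΦ, TensorProduct.tensorTensorTensorComm_tmul]
    have key : ∑ j ∈ ry.index, ∑ l ∈ (ry₁ j).index, ∑ i ∈ rx.index, ∑ k ∈ (rx₁ i).index,
        ((rx₁ i).left k ⊗ₜ[R] (ry₁ j).left l) ⊗ₜ[R]
          (((rx₁ i).right k ⊗ₜ[R] (ry₁ j).right l) ⊗ₜ[R] (rx.right i ⊗ₜ[R] ry.right j))
      = ∑ j ∈ ry.index, ∑ l ∈ (ry₂ j).index, ∑ i ∈ rx.index, ∑ k ∈ (rx₂ i).index,
        (rx.left i ⊗ₜ[R] ry.left j) ⊗ₜ[R]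
          (((rx₂ i).left k ⊗ₜ[R] (ry₂ j).left l) ⊗ₜ[R]
            ((rx₂ i).right k ⊗ₜ[R] (ry₂ j).right l)) := by
      have h2 := congrArg₂ (fun u (v : B ⊗[R] (B ⊗[R] B)) => Φ (u ⊗ₜ[R] v)) hx hy
      simpa only [TensorProduct.sum_tmul, TensorProduct.tmul_sum, map_sum, Φpure] using h2
    have eL : ((TensorProduct.assoc R (A ⊗[R] B) (A ⊗[R] B) (A ⊗[R] B)).toLinearMap ∘ₗ
        LinearMap.rTensor (A ⊗[R] B) Coalgebra.comul ∘ₗ Coalgebra.comul) (x ⊗ₜ[R] y)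
        = ∑ i ∈ rx.index, ∑ j ∈ ry.index, ∑ k ∈ (rx₁ i).index, ∑ l ∈ (ry₁ j).index,
        ((rx₁ i).left k ⊗ₜ[R] (ry₁ j).left l) ⊗ₜ[R]
          (((rx₁ i).right k ⊗ₜ[R] (ry₁ j).right l) ⊗ₜ[R] (rx.right i ⊗ₜ[R] ry.right j)) := by
      rw [LinearMap.comp_apply, LinearMap.comp_apply, comul_tmul_repr rx ry]
      simp only [map_sum, LinearMap.rTensor_tmul]
      refine Finset.sum_congr rfl fun i _ => Finset.sum_congr rfl fun j _ => ?_
      rw [comul_tmul_repr (rx₁ i) (ry₁ j), TensorProduct.sum_tmul]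
      simp only [TensorProduct.sum_tmul, map_sum, LinearEquiv.coe_coe,
        TensorProduct.assoc_tmul]
    have eR : (LinearMap.lTensor (A ⊗[R] B) Coalgebra.comul ∘ₗ Coalgebra.comul) (x ⊗ₜ[R] y)
        = ∑ i ∈ rx.index, ∑ j ∈ ry.index, ∑ k ∈ (rx₂ i).index, ∑ l ∈ (ry₂ j).index,
        (rx.left i ⊗ₜ[R] ry.left j) ⊗ₜ[R]
          (((rx₂ i).left k ⊗ₜ[R] (ry₂ j).left l) ⊗ₜ[R]
            ((rx₂ i).right k ⊗ₜ[R] (ry₂ j).right l)) := by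
      rw [LinearMap.comp_apply, comul_tmul_repr rx ry]
      simp only [map_sum, LinearMap.lTensor_tmul]
      refine Finset.sum_congr rfl fun i _ => Finset.sum_congr rfl fun j _ => ?_
      rw [comul_tmul_repr (rx₂ i) (ry₂ j)]
      simp only [TensorProduct.tmul_sum]
    rw [eL, eR]
    have pL := sum4_perm rx.index ry.index (fun i => (rx₁ i).index) (fun j => (ry₁ j).index)
      (fun i j k l => ((rx₁ i).left k ⊗ₜ[R] (ry₁ j).left l) ⊗ₜ[R]
        (((rx₁ i).right k ⊗ₜ[R] (ry₁ j).right l) ⊗ₜ[R] (rx.right i ⊗ₜ[R] ry.right j)))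
    have pR := sum4_perm rx.index ry.index (fun i => (rx₂ i).index) (fun j => (ry₂ j).index)
      (fun i j k l => (rx.left i ⊗ₜ[R] ry.left j) ⊗ₜ[R]
        (((rx₂ i).left k ⊗ₜ[R] (ry₂ j).left l) ⊗ₜ[R]
          ((rx₂ i).right k ⊗ₜ[R] (ry₂ j).right l)))
    exact pL.trans (key.trans pR.symm)
  rTensor_counit_comp_comul := by
    apply TensorProduct.ext'
    intro x y
    set rx : Coalgebra.Repr R x (A × A) := ℛ R x
    set ry : Coalgebra.Repr R y (B × B) := ℛ R y
    rw [LinearMap.comp_apply, comul_tmul_repr rx ry]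
    simp only [map_sum, LinearMap.rTensor_tmul, counit_tmul,
      LinearMap.coe_comp, Function.comp_apply, TensorProduct.map_tmul, LinearMap.mul'_apply]
    apply (TensorProduct.lid R (A ⊗[R] B)).injective
    simp only [map_sum, TensorProduct.lid_tmul, TensorProduct.mk_apply, one_smul, mul_smul]
    have inner : ∀ i, ∑ j ∈ ry.index,
        counit (R := R) (ry.left j) • (rx.right i ⊗ₜ[R] ry.right j)
        = rx.right i ⊗ₜ[R] y := by
      intro i
      conv_rhs => rw [← sum_counit_smul ry, TensorProduct.tmul_sum]
      simp only [TensorProduct.tmul_smul]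
    have outer : ∑ i ∈ rx.index,
        counit (R := R) (rx.left i) • (rx.right i ⊗ₜ[R] y) = x ⊗ₜ[R] y := by
      conv_rhs => rw [← sum_counit_smul rx, TensorProduct.sum_tmul]
      simp only [TensorProduct.smul_tmul']
    calc ∑ i ∈ rx.index, ∑ j ∈ ry.index, counit (R := R) (rx.left i) •
          counit (R := R) (ry.left j) • (rx.right i ⊗ₜ[R] ry.right j)
        = ∑ i ∈ rx.index, counit (R := R) (rx.left i) • (rx.right i ⊗ₜ[R] y) := by
          refine Finset.sum_congr rfl fun i _ => ?_
          rw [← Finset.smul_sum, inner i]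
      _ = x ⊗ₜ[R] y := outer
  lTensor_counit_comp_comul := by
    apply TensorProduct.ext'
    intro x y
    set rx : Coalgebra.Repr R x (A × A) := ℛ R x
    set ry : Coalgebra.Repr R y (B × B) := ℛ R y
    rw [LinearMap.comp_apply, comul_tmul_repr rx ry]
    simp only [map_sum, LinearMap.lTensor_tmul, counit_tmul,
      LinearMap.coe_comp, Function.comp_apply, TensorProduct.map_tmul, LinearMap.mul'_apply]
    apply (TensorProduct.rid R (A ⊗[R] B)).injective
    simp only [map_sum, TensorProduct.rid_tmul, one_smul, mul_smul]
    have inner : ∀ i, ∑ j ∈ ry.index,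
        counit (R := R) (ry.right j) • (rx.left i ⊗ₜ[R] ry.left j)
        = rx.left i ⊗ₜ[R] y := by
      intro i
      conv_rhs => rw [← sum_smul_counit ry, TensorProduct.tmul_sum]
      simp only [TensorProduct.tmul_smul]
    have outer : ∑ i ∈ rx.index,
        counit (R := R) (rx.right i) • (rx.left i ⊗ₜ[R] y) = x ⊗ₜ[R] y := by
      conv_rhs => rw [← sum_smul_counit rx, TensorProduct.sum_tmul]
      simp only [TensorProduct.smul_tmul']
    calc ∑ i ∈ rx.index, ∑ j ∈ ry.index, counit (R := R) (rx.right i) •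
          counit (R := R) (ry.right j) • (rx.left i ⊗ₜ[R] ry.left j)
        = ∑ i ∈ rx.index, counit (R := R) (rx.right i) • (rx.left i ⊗ₜ[R] y) := by
          refine Finset.sum_congr rfl fun i _ => ?_
          rw [← Finset.smul_sum, inner i]
      _ = x ⊗ₜ[R] y := outer
      _ = (TensorProduct.rid R (A ⊗[R] B))
            (((TensorProduct.mk R (A ⊗[R] B) R).flip 1) (x ⊗ₜ[R] y)) := by simp

end TensorCoalg


section Hopf

variable {R : Type*} [CommSemiring R] {H : Type*} [Semiring H] [HopfAlgebra R H]

local notation "S" => (HopfAlgebra.antipode (R := R) (A := H))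

lemma counit_antipode (x : H) : counit (R := R) (S x) = counit (R := R) x := by
  have h := congrArg (counit (R := R)) (HopfAlgebra.sum_antipode_mul_eq_algebraMap_counit (ℛ R x))
  simp only [map_sum, Bialgebra.counit_mul, Bialgebra.counit_algebraMap] at h
  have hx : S x = ∑ i ∈ (ℛ R x).index,
      counit (R := R) ((ℛ R x).right i) • S ((ℛ R x).left i) := by
    conv_lhs => rw [← sum_smul_counit (ℛ R x)]
    rw [map_sum]
    simp only [map_smul]
  rw [hx, map_sum]
  simp only [map_smul, smul_eq_mul]
  rw [← h]
  exact Finset.sum_congr rfl fun i _ => mul_comm _ _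

lemma conv_comulS_comul :
    conv (Coalgebra.comul ∘ₗ (HopfAlgebra.antipode (R := R) (A := H))) Coalgebra.comul
      = convOne := by
  ext x
  set r : Coalgebra.Repr R x (H × H) := ℛ R x
  rw [conv_repr _ _ r]
  have : ∀ i ∈ r.index,
      (Coalgebra.comul ∘ₗ (HopfAlgebra.antipode (R := R) (A := H))) (r.left i) *
        Coalgebra.comul (r.right i) = Coalgebra.comul (R := R) (S (r.left i) * r.right i) := by
    intro i _
    rw [LinearMap.comp_apply, Bialgebra.comul_mul]
  rw [Finset.sum_congr rfl this, ← map_sum, HopfAlgebra.sum_antipode_mul_eq_algebraMap_counit r,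
    Bialgebra.comul_algebraMap, convOne_apply]

lemma conv_comul_antiS :
    conv (Coalgebra.comul (R := R) (A := H))
      ((TensorProduct.comm R H H).toLinearMap ∘ₗ
        TensorProduct.map (HopfAlgebra.antipode (R := R)) (HopfAlgebra.antipode (R := R)) ∘ₗ
        Coalgebra.comul) = convOne := by
  ext x
  set r : Coalgebra.Repr R x (H × H) := ℛ R x
  set r₁ : ∀ i : H × H, Coalgebra.Repr R (r.left i) (H × H) := fun i => ℛ R (r.left i)
  set r₂ : ∀ i : H × H, Coalgebra.Repr R (r.right i) (H × H) := fun i => ℛ R (r.right i)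
  rw [conv_repr _ _ r]
  have hg : ∀ i ∈ r.index, Coalgebra.comul (R := R) (r.left i) *
      ((TensorProduct.comm R H H).toLinearMap ∘ₗ
        TensorProduct.map (HopfAlgebra.antipode (R := R)) (HopfAlgebra.antipode (R := R)) ∘ₗ
        Coalgebra.comul) (r.right i)
      = ∑ j ∈ (r₂ i).index, Coalgebra.comul (R := R) (r.left i) *
          (S ((r₂ i).right j) ⊗ₜ[R] S ((r₂ i).left j)) := by
    intro i _
    rw [LinearMap.comp_apply, LinearMap.comp_apply, ← (r₂ i).eq, map_sum, map_sum]
    simp only [TensorProduct.map_tmul, LinearEquiv.coe_coe, TensorProduct.comm_tmul,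
      Finset.mul_sum]
  rw [Finset.sum_congr rfl hg]
  -- transport along coassociativity
  set Ψ : H ⊗[R] (H ⊗[R] H) →ₗ[R] H ⊗[R] H :=
    LinearMap.mul' R (H ⊗[R] H) ∘ₗ
      TensorProduct.map Coalgebra.comul
        ((TensorProduct.comm R H H).toLinearMap ∘ₗ
          TensorProduct.map (HopfAlgebra.antipode (R := R)) (HopfAlgebra.antipode (R := R)))
    with hΨ
  have Ψpure : ∀ a u v : H, Ψ (a ⊗ₜ[R] (u ⊗ₜ[R] v)) =
      Coalgebra.comul (R := R) a * (S v ⊗ₜ[R] S u) := by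
    intro a u v
    simp [hΨ]
  have key := congrArg Ψ (Coalgebra.sum_tmul_tmul_eq r r₁ r₂)
  simp only [map_sum, Ψpure] at key
  rw [← key]
  -- now collapse each inner sum
  have inner : ∀ i ∈ r.index, ∑ k ∈ (r₁ i).index,
      Coalgebra.comul (R := R) ((r₁ i).left k) * (S (r.right i) ⊗ₜ[R] S ((r₁ i).right k))
      = (r.left i ⊗ₜ[R] (1 : H)) * (S (r.right i) ⊗ₜ[R] (1 : H)) := by
    intro i _
    have hsplit : ∀ k ∈ (r₁ i).index,
        Coalgebra.comul (R := R) ((r₁ i).left k) * (S (r.right i) ⊗ₜ[R] S ((r₁ i).right k))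
        = (Coalgebra.comul (R := R) ((r₁ i).left k) * ((1 : H) ⊗ₜ[R] S ((r₁ i).right k))) *
            (S (r.right i) ⊗ₜ[R] (1 : H)) := by
      intro k _
      rw [mul_assoc]
      congr 1
      rw [Algebra.TensorProduct.tmul_mul_tmul, one_mul, mul_one]
    rw [Finset.sum_congr rfl hsplit, ← Finset.sum_mul]
    congr 1
    -- ∑ₖ comul (z₁ k) * (1 ⊗ S (z₂ k)) = r.left i ⊗ 1
    set ra : Coalgebra.Repr R (r.left i) (H × H) := r₁ i
    set a₁ : ∀ k : H × H, Coalgebra.Repr R (ra.left k) (H × H) := fun k => ℛ R (ra.left k)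
    set a₂ : ∀ k : H × H, Coalgebra.Repr R (ra.right k) (H × H) := fun k => ℛ R (ra.right k)
    set Θ : H ⊗[R] (H ⊗[R] H) →ₗ[R] H ⊗[R] H :=
      LinearMap.lTensor H (LinearMap.mul' R H ∘ₗ
        LinearMap.lTensor H (HopfAlgebra.antipode (R := R))) with hΘ
    have Θpure : ∀ p q c : H, Θ (p ⊗ₜ[R] (q ⊗ₜ[R] c)) = p ⊗ₜ[R] (q * S c) := by
      intro p q c
      simp [hΘ]
    have key2 := congrArg Θ (Coalgebra.sum_tmul_tmul_eq ra a₁ a₂)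
    simp only [map_sum, Θpure] at key2
    have hexp : ∀ k ∈ ra.index,
        Coalgebra.comul (R := R) (ra.left k) * ((1 : H) ⊗ₜ[R] S (ra.right k))
        = ∑ l ∈ (a₁ k).index, (a₁ k).left l ⊗ₜ[R] ((a₁ k).right l * S (ra.right k)) := by
      intro k _
      rw [← (a₁ k).eq, Finset.sum_mul]
      exact Finset.sum_congr rfl fun l _ => by
        rw [Algebra.TensorProduct.tmul_mul_tmul, mul_one]
    rw [Finset.sum_congr rfl hexp, key2]
    have hcollapse : ∀ k ∈ ra.index,
        ∑ l ∈ (a₂ k).index, ra.left k ⊗ₜ[R] ((a₂ k).left l * S ((a₂ k).right l))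
        = counit (R := R) (ra.right k) • (ra.left k ⊗ₜ[R] (1 : H)) := by
      intro k _
      rw [← TensorProduct.tmul_sum, HopfAlgebra.sum_mul_antipode_eq_algebraMap_counit (a₂ k),
        Algebra.algebraMap_eq_smul_one, TensorProduct.tmul_smul]
    rw [Finset.sum_congr rfl hcollapse]
    simp only [TensorProduct.smul_tmul']
    rw [← TensorProduct.sum_tmul, sum_smul_counit ra]
  rw [Finset.sum_congr rfl inner]
  have final : ∀ i ∈ r.index,
      (r.left i ⊗ₜ[R] (1 : H)) * (S (r.right i) ⊗ₜ[R] (1 : H))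
      = (r.left i * S (r.right i)) ⊗ₜ[R] (1 : H) := by
    intro i _
    rw [Algebra.TensorProduct.tmul_mul_tmul, mul_one]
  rw [Finset.sum_congr rfl final, ← TensorProduct.sum_tmul,
    HopfAlgebra.sum_mul_antipode_eq_algebraMap_counit r, convOne_apply, Algebra.TensorProduct.algebraMap_apply]

/-- The antipode is an anti-coalgebra morphism. -/
lemma comul_comp_antipode :
    (Coalgebra.comul (R := R) (A := H)) ∘ₗ HopfAlgebra.antipode (R := R)
      = (TensorProduct.comm R H H).toLinearMap ∘ₗ
        TensorProduct.map (HopfAlgebra.antipode (R := R)) (HopfAlgebra.antipode (R := R)) ∘ₗ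
        Coalgebra.comul :=
  conv_cancel conv_comulS_comul conv_comul_antiS

lemma comul_antipode_repr {b : H} {ι : Type*} (rb : Coalgebra.Repr R b ι) :
    Coalgebra.comul (R := R) (S b)
      = ∑ j ∈ rb.index, S (rb.right j) ⊗ₜ[R] S (rb.left j) := by
  have h := LinearMap.congr_fun (comul_comp_antipode (R := R) (H := H)) b
  simp only [LinearMap.comp_apply] at h
  rw [h, ← rb.eq, map_sum, map_sum]
  simp only [TensorProduct.map_tmul, LinearEquiv.coe_coe, TensorProduct.comm_tmul]

end Hopf

section HopfMul

variable {R : Type*} [CommSemiring R] {H : Type*} [Semiring H] [HopfAlgebra R H]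

local notation "S" => (HopfAlgebra.antipode (R := R) (A := H))

/-- A representation of `comul (x * y)` built from representations of `x` and `y`. -/
noncomputable def Repr.mul {x y : H} {ι κ : Type*} (rx : Coalgebra.Repr R x ι)
    (ry : Coalgebra.Repr R y κ) :
    Coalgebra.Repr R (x * y) (ι × κ) where
  index := rx.index ×ˢ ry.index
  left p := rx.left p.1 * ry.left p.2
  right p := rx.right p.1 * ry.right p.2
  eq := by
    rw [Bialgebra.comul_mul, ← rx.eq, ← ry.eq, Finset.sum_mul_sum]
    rw [Finset.sum_product]
    simp only [Algebra.TensorProduct.tmul_mul_tmul]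

lemma antipode_mul (x y : H) : S (x * y) = S y * S x := by
  letI : Coalgebra R (H ⊗[R] H) := tensorCoalgebra
  have hfm : conv ((HopfAlgebra.antipode (R := R)) ∘ₗ LinearMap.mul' R H)
      (LinearMap.mul' R H) = convOne := by
    apply TensorProduct.ext'
    intro x y
    set rx : Coalgebra.Repr R x (H × H) := ℛ R x
    set ry : Coalgebra.Repr R y (H × H) := ℛ R y
    rw [conv_repr _ _ (Repr.tmul rx ry)]
    have := HopfAlgebra.sum_antipode_mul_eq_algebraMap_counit (Repr.mul rx ry)
    simp only [Repr.mul, Repr.tmul, LinearMap.comp_apply, LinearMap.mul'_apply] at this ⊢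
    rw [this, convOne_apply]
    erw [counit_tmul]
    rw [Bialgebra.counit_mul]
  have hmg : conv (LinearMap.mul' R H)
      (LinearMap.mul' R H ∘ₗ
        TensorProduct.map (HopfAlgebra.antipode (R := R)) (HopfAlgebra.antipode (R := R)) ∘ₗ
        (TensorProduct.comm R H H).toLinearMap) = convOne := by
    apply TensorProduct.ext'
    intro x y
    set rx : Coalgebra.Repr R x (H × H) := ℛ R x
    set ry : Coalgebra.Repr R y (H × H) := ℛ R y
    rw [conv_repr _ _ (Repr.tmul rx ry)]
    simp only [Repr.tmul, LinearMap.comp_apply, LinearMap.mul'_apply, LinearEquiv.coe_coe,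
      TensorProduct.comm_tmul, TensorProduct.map_tmul]
    rw [Finset.sum_product]
    have hi : ∀ i ∈ rx.index, ∑ j ∈ ry.index,
        rx.left i * ry.left j * (S (ry.right j) * S (rx.right i))
        = rx.left i * (S (rx.right i) * algebraMap R H (counit (R := R) y)) := by
      intro i _
      have hj : ∀ j ∈ ry.index, rx.left i * ry.left j * (S (ry.right j) * S (rx.right i))
          = rx.left i * ((ry.left j * S (ry.right j)) * S (rx.right i)) := by
        intro j _
        rw [mul_assoc, ← mul_assoc (ry.left j)]
      rw [Finset.sum_congr rfl hj, ← Finset.mul_sum, ← Finset.sum_mul,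
        HopfAlgebra.sum_mul_antipode_eq_algebraMap_counit ry, Algebra.commutes]
    rw [Finset.sum_congr rfl hi]
    have : ∀ i ∈ rx.index, rx.left i * (S (rx.right i) * algebraMap R H (counit (R := R) y))
        = (rx.left i * S (rx.right i)) * algebraMap R H (counit (R := R) y) := by
      intro i _
      rw [mul_assoc]
    rw [Finset.sum_congr rfl this, ← Finset.sum_mul, HopfAlgebra.sum_mul_antipode_eq_algebraMap_counit rx,
      ← map_mul, convOne_apply]
    erw [counit_tmul]
  have heq := conv_cancel hfm hmg
  have := LinearMap.congr_fun heq (x ⊗ₜ[R] y)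
  simpa using this

end HopfMul

end HopfHeapAux

open HopfHeapAux in
/-- The heap ternary operation `[a,b,c] = a S(b) c` as a trilinear map. -/
noncomputable def heapChi (F : Type u) (H : Type v) [Field F] [Ring H] [HopfAlgebra F H] :
    H →ₗ[F] H →ₗ[F] H →ₗ[F] H :=
  ((LinearMap.mul F H).compl₂ (HopfAlgebra.antipode (R := F))).compr₂ (LinearMap.mul F H)

lemma heapChi_apply {F : Type u} {H : Type v} [Field F] [Ring H] [HopfAlgebra F H] (a b c : H) :
    heapChi F H a b c = a * HopfAlgebra.antipode (R := F) b * c := rfl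

/-- A Hopf algebra `H` with antipode `S` is a Hopf heap via `[a,b,c] = a S(b) c`,
with Grunspan map `S ∘ S`. -/
theorem hopfAlgebra_toHopfHeap (F : Type u) (H : Type v) [Field F] [Ring H]
    [HopfAlgebra F H] :
    ∃ hh : HopfHeap F H,
      (∀ a b c : H, hh.χ a b c = a * HopfAlgebra.antipode (R := F) b * c) ∧
      hh.IsGrunspan ((HopfAlgebra.antipode (R := F)).comp (HopfAlgebra.antipode (R := F))) := by
  classical
  open HopfHeapAux in
  refine ⟨{ χ := heapChi F H
            counit_χ := ?_
            comul_χ := ?_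
            assoc := ?_
            heap_left := ?_
            heap_right := ?_ }, fun a b c => rfl, ?_, ?_, ?_⟩
  · intro a b c
    simp only [heapChi_apply, Bialgebra.counit_mul, HopfHeapAux.counit_antipode]
  · intro a b c _ _ _ ra rb rc
    simp only [heapChi_apply]
    rw [Bialgebra.comul_mul, Bialgebra.comul_mul,
      HopfHeapAux.comul_antipode_repr rb, ← ra.eq, ← rc.eq]
    rw [Finset.sum_mul_sum]
    simp only [Finset.sum_mul, Finset.mul_sum, Algebra.TensorProduct.tmul_mul_tmul]
    rw [Finset.sum_comm]
    exact Finset.sum_congr rfl fun i _ => Finset.sum_comm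
  · intro a b c d e
    simp only [heapChi_apply, mul_assoc]
  · intro c a _ rc
    simp only [heapChi_apply]
    rw [← Finset.sum_mul, HopfAlgebra.sum_mul_antipode_eq_algebraMap_counit rc, ← Algebra.smul_def]
  · intro c a _ rc
    simp only [heapChi_apply, mul_assoc]
    rw [← Finset.mul_sum, HopfAlgebra.sum_antipode_mul_eq_algebraMap_counit rc, ← Algebra.commutes,
      ← Algebra.smul_def]
  · intro c
    simp only [LinearMap.comp_apply, HopfHeapAux.counit_antipode]
  · intro c _ rc
    let rSc : Coalgebra.Repr F (HopfAlgebra.antipode (R := F) c) _ :=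
      { index := rc.index
        left := fun i => HopfAlgebra.antipode (R := F) (rc.right i)
        right := fun i => HopfAlgebra.antipode (R := F) (rc.left i)
        eq := (HopfHeapAux.comul_antipode_repr rc).symm }
    simp only [LinearMap.comp_apply]
    exact HopfHeapAux.comul_antipode_repr rSc
  · intro a b c d e
    simp only [heapChi_apply, LinearMap.comp_apply]
    rw [HopfHeapAux.antipode_mul (d * HopfAlgebra.antipode (R := F) c) b,
      HopfHeapAux.antipode_mul d (HopfAlgebra.antipode (R := F) c)]
    simp only [mul_assoc]
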